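/- Let n ≥ 1 and let ρ : ℝ → ℝ be a measurable function such that z ↦ z^k ρ(z) is Lebesgue integrable on ℝ for all 0 ≤ k ≤ 2n. Set μ_k = ∫_ℝ z^k ρ(z) dz and D_n = det(μ_{i+j})_{0≤i,j≤n−1}, and define p_n(z) as the determinant of the (n+1)×(n+1) matrix whose entry in row i (0 ≤ i ≤ n) and column j is μ_{i+j} for 0 ≤ j ≤ n−1 and z^i for j = n. Then for every z ∈ ℝ, n! · p_n(z) = ∫_{ℝ^n} Δ_n(u)^2 ∏_{k=1}^n (z − u_k) ρ(u_k) du_1 ⋯ du_n (Heine's formula for orthogonal polynomials; when D_n ≠ 0, p_n/D_n is the monic orthogonal polynomial of degree n for the weight ρ). -/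

import Mathlib

open MeasureTheory

open Finset Equiv Equiv.Perm

lemma Ioi_castSucc_eq' {n : ℕ} (i : Fin n) :
    Finset.Ioi i.castSucc =
      insert (Fin.last n) ((Finset.Ioi i).map Fin.castSuccEmb) := by
  ext j
  constructor
  · intro hj
    rw [Finset.mem_Ioi] at hj
    rcases eq_or_ne j (Fin.last n) with rfl | hne
    · exact Finset.mem_insert_self _ _
    · obtain ⟨y, rfl⟩ := Fin.exists_castSucc_eq.2 hne
      exact Finset.mem_insert_of_mem
        (Finset.mem_map.2 ⟨y, Finset.mem_Ioi.2 (Fin.castSucc_lt_castSucc_iff.mp hj), rfl⟩)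
  · intro hj
    rcases Finset.mem_insert.mp hj with rfl | hj
    · exact Finset.mem_Ioi.2 (Fin.castSucc_lt_last i)
    · obtain ⟨y, hy, rfl⟩ := Finset.mem_map.mp hj
      exact Finset.mem_Ioi.2 (Fin.castSucc_lt_castSucc_iff.2 (Finset.mem_Ioi.mp hy))

lemma prod_Ioi_castSucc' {M : Type*} [CommMonoid M] {n : ℕ} (i : Fin n)
    (g : Fin (n + 1) → M) :
    ∏ j ∈ Finset.Ioi i.castSucc, g j =
      (∏ j ∈ Finset.Ioi i, g j.castSucc) * g (Fin.last n) := by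
  rw [Ioi_castSucc_eq', Finset.prod_insert, Finset.prod_map, mul_comm]
  · rfl
  · intro hmem
    obtain ⟨y, -, h⟩ := Finset.mem_map.mp hmem
    exact (Fin.castSucc_lt_last y).ne h

lemma vandermonde_snoc' (n : ℕ) (u : Fin n → ℝ) (z : ℝ) :
    (Matrix.vandermonde (Fin.snoc u z : Fin (n + 1) → ℝ)).det =
      (Matrix.vandermonde u).det * ∏ k : Fin n, (z - u k) := by
  rw [Matrix.det_vandermonde, Matrix.det_vandermonde, Fin.prod_univ_castSucc]
  have hlast : ∏ j ∈ Finset.Ioi (Fin.last n),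
      ((Fin.snoc u z : Fin (n+1) → ℝ) j - (Fin.snoc u z : Fin (n+1) → ℝ) (Fin.last n)) = 1 :=
    Finset.prod_eq_one fun j hj =>
      absurd (Finset.mem_Ioi.mp hj) (not_lt.2 (Fin.le_last j))
  rw [hlast, mul_one]
  have : ∀ i : Fin n, ∏ j ∈ Finset.Ioi i.castSucc,
      ((Fin.snoc u z : Fin (n+1) → ℝ) j - (Fin.snoc u z : Fin (n+1) → ℝ) i.castSucc)
      = (∏ j ∈ Finset.Ioi i, (u j - u i)) * (z - u i) := by
    intro i
    rw [prod_Ioi_castSucc']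
    simp [Fin.snoc_castSucc, Fin.snoc_last]
  rw [Finset.prod_congr rfl fun i _ => this i, Finset.prod_mul_distrib]

def extendLast' (n : ℕ) (σ : Equiv.Perm (Fin n)) : Equiv.Perm (Fin (n + 1)) :=
  finSumFinEquiv.permCongr (Equiv.sumCongr σ (Equiv.refl (Fin 1)))

lemma extendLast_castSucc {n : ℕ} (σ : Equiv.Perm (Fin n)) (k : Fin n) :
    extendLast' n σ k.castSucc = (σ k).castSucc := by
  have h1 : (k.castSucc : Fin (n + 1)) = Fin.castAdd 1 k := rfl
  have h2 : ((σ k).castSucc : Fin (n + 1)) = Fin.castAdd 1 (σ k) := rfl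
  rw [extendLast', Equiv.permCongr_apply, h1, h2, finSumFinEquiv_symm_apply_castAdd]
  simp [finSumFinEquiv_apply_left]

lemma extendLast_last {n : ℕ} (σ : Equiv.Perm (Fin n)) :
    extendLast' n σ (Fin.last n) = Fin.last n := by
  rw [extendLast', Equiv.permCongr_apply, finSumFinEquiv_symm_last]
  simp [finSumFinEquiv_apply_right]
  ext
  simp

lemma sign_extendLast {n : ℕ} (σ : Equiv.Perm (Fin n)) :
    Equiv.Perm.sign (extendLast' n σ) = Equiv.Perm.sign σ := by
  rw [extendLast', Equiv.Perm.sign_permCongr, Equiv.Perm.sign_sumCongr]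
  simp

lemma heine_comb (n : ℕ) (μ : ℕ → ℝ) (z : ℝ) :
    ∑ σ : Equiv.Perm (Fin n), ∑ τ : Equiv.Perm (Fin (n + 1)),
        ((Equiv.Perm.sign σ : ℤ) : ℝ) * ((Equiv.Perm.sign τ : ℤ) : ℝ) *
          (z ^ (τ (Fin.last n) : ℕ) *
            ∏ k : Fin n, μ ((σ k : ℕ) + (τ k.castSucc : ℕ)))
      = (n.factorial : ℝ) *
        Matrix.det (Matrix.of fun i j : Fin (n + 1) =>
          if (j : ℕ) < n then μ ((i : ℕ) + (j : ℕ)) else z ^ (i : ℕ)) := by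
  have hdet : Matrix.det (Matrix.of fun i j : Fin (n + 1) =>
        if (j : ℕ) < n then μ ((i : ℕ) + (j : ℕ)) else z ^ (i : ℕ))
      = ∑ π : Equiv.Perm (Fin (n + 1)),
          ((Equiv.Perm.sign π : ℤ) : ℝ) *
            (z ^ (π (Fin.last n) : ℕ) *
              ∏ k : Fin n, μ ((k : ℕ) + (π k.castSucc : ℕ))) := by
    rw [Matrix.det_apply']
    refine Finset.sum_congr rfl fun π _ => ?_
    rw [Fin.prod_univ_castSucc]
    have hl : (Matrix.of fun i j : Fin (n + 1) =>
        if (j : ℕ) < n then μ ((i : ℕ) + (j : ℕ)) else z ^ (i : ℕ))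
          (π (Fin.last n)) (Fin.last n) = z ^ (π (Fin.last n) : ℕ) := by
      simp [Matrix.of_apply, Fin.val_last]
    have hc : ∀ k : Fin n, (Matrix.of fun i j : Fin (n + 1) =>
        if (j : ℕ) < n then μ ((i : ℕ) + (j : ℕ)) else z ^ (i : ℕ))
          (π k.castSucc) k.castSucc = μ ((k : ℕ) + (π k.castSucc : ℕ)) := by
      intro k
      simp only [Matrix.of_apply, Fin.coe_castSucc, k.isLt, if_pos, add_comm]
    rw [Finset.prod_congr rfl fun k _ => hc k, hl]
    ring
  have hσ : ∀ σ : Equiv.Perm (Fin n),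
      ∑ τ : Equiv.Perm (Fin (n + 1)),
        ((Equiv.Perm.sign σ : ℤ) : ℝ) * ((Equiv.Perm.sign τ : ℤ) : ℝ) *
          (z ^ (τ (Fin.last n) : ℕ) *
            ∏ k : Fin n, μ ((σ k : ℕ) + (τ k.castSucc : ℕ)))
      = ∑ π : Equiv.Perm (Fin (n + 1)),
          ((Equiv.Perm.sign π : ℤ) : ℝ) *
            (z ^ (π (Fin.last n) : ℕ) *
              ∏ k : Fin n, μ ((k : ℕ) + (π k.castSucc : ℕ))) := by
    intro σ
    rw [← Equiv.sum_comp (Equiv.mulRight (extendLast' n σ))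
      (fun τ : Equiv.Perm (Fin (n + 1)) =>
        ((Equiv.Perm.sign σ : ℤ) : ℝ) * ((Equiv.Perm.sign τ : ℤ) : ℝ) *
          (z ^ (τ (Fin.last n) : ℕ) *
            ∏ k : Fin n, μ ((σ k : ℕ) + (τ k.castSucc : ℕ))))]
    refine Finset.sum_congr rfl fun π _ => ?_
    simp only [Equiv.coe_mulRight]
    have hsign : ((Equiv.Perm.sign σ : ℤ) : ℝ) *
        ((Equiv.Perm.sign (π * extendLast' n σ) : ℤ) : ℝ)
        = ((Equiv.Perm.sign π : ℤ) : ℝ) := by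
      rw [Equiv.Perm.sign_mul, sign_extendLast]
      rcases Int.units_eq_one_or (Equiv.Perm.sign σ) with h | h <;>
        rcases Int.units_eq_one_or (Equiv.Perm.sign π) with h' | h' <;>
          simp [h, h']
    have hprod : ∏ k : Fin n, μ ((σ k : ℕ) + ((π * extendLast' n σ) k.castSucc : ℕ))
        = ∏ k : Fin n, μ ((k : ℕ) + (π k.castSucc : ℕ)) := by
      rw [← Equiv.prod_comp σ (fun k : Fin n => μ ((k : ℕ) + (π k.castSucc : ℕ)))]
      refine Finset.prod_congr rfl fun k _ => ?_
      rw [Equiv.Perm.mul_apply, extendLast_castSucc]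
    have hlast : (π * extendLast' n σ) (Fin.last n) = π (Fin.last n) := by
      rw [Equiv.Perm.mul_apply, extendLast_last]
    rw [hprod, hlast, hsign]
  rw [Finset.sum_congr rfl fun σ _ => hσ σ, Finset.sum_const, Finset.card_univ,
    Fintype.card_perm, Fintype.card_fin, nsmul_eq_mul, hdet]


lemma heine_pointwise (n : ℕ) (ρ : ℝ → ℝ) (z : ℝ) (u : Fin n → ℝ) :
    (∏ j : Fin n, ∏ k ∈ Finset.Ioi j, (u k - u j)) ^ 2 *
        ∏ k : Fin n, ((z - u k) * ρ (u k))
      = ∑ σ : Equiv.Perm (Fin n), ∑ τ : Equiv.Perm (Fin (n + 1)),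
          ((Equiv.Perm.sign σ : ℤ) : ℝ) * ((Equiv.Perm.sign τ : ℤ) : ℝ) *
            (z ^ (τ (Fin.last n) : ℕ) *
              ∏ k : Fin n, (u k ^ ((σ k : ℕ) + (τ k.castSucc : ℕ)) * ρ (u k))) := by
  have expand1 : (Matrix.vandermonde u).det
      = ∑ σ : Equiv.Perm (Fin n), ((Equiv.Perm.sign σ : ℤ) : ℝ) * ∏ i, u i ^ (σ i : ℕ) := by
    rw [← Matrix.det_transpose, Matrix.det_apply']
    exact Finset.sum_congr rfl fun σ _ => rfl
  have expand2 : (Matrix.vandermonde (Fin.snoc u z : Fin (n + 1) → ℝ)).det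
      = ∑ τ : Equiv.Perm (Fin (n + 1)), ((Equiv.Perm.sign τ : ℤ) : ℝ) *
          ((∏ k : Fin n, u k ^ (τ k.castSucc : ℕ)) * z ^ (τ (Fin.last n) : ℕ)) := by
    rw [← Matrix.det_transpose, Matrix.det_apply']
    refine Finset.sum_congr rfl fun τ _ => ?_
    congr 1
    have : ∀ i : Fin (n + 1), (Matrix.vandermonde (Fin.snoc u z : Fin (n + 1) → ℝ)).transpose (τ i) i
        = (Fin.snoc u z : Fin (n + 1) → ℝ) i ^ (τ i : ℕ) := fun i => rfl
    rw [Finset.prod_congr rfl fun i _ => this i, Fin.prod_univ_castSucc]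
    simp [Fin.snoc_castSucc, Fin.snoc_last]
  have step : (∏ j : Fin n, ∏ k ∈ Finset.Ioi j, (u k - u j)) ^ 2 *
        ∏ k : Fin n, ((z - u k) * ρ (u k))
      = (Matrix.vandermonde u).det *
          (Matrix.vandermonde (Fin.snoc u z : Fin (n + 1) → ℝ)).det *
          ∏ k : Fin n, ρ (u k) := by
    rw [vandermonde_snoc', Matrix.det_vandermonde, Finset.prod_mul_distrib]
    ring
  rw [step, expand1, expand2, Finset.sum_mul, Finset.sum_mul]
  refine Finset.sum_congr rfl fun σ _ => ?_
  rw [Finset.mul_sum, Finset.sum_mul]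
  refine Finset.sum_congr rfl fun τ _ => ?_
  have hcomb : ∏ k : Fin n, (u k ^ ((σ k : ℕ) + (τ k.castSucc : ℕ)) * ρ (u k))
      = ((∏ i, u i ^ (σ i : ℕ)) * ∏ k : Fin n, u k ^ (τ k.castSucc : ℕ)) *
          ∏ k : Fin n, ρ (u k) := by
    rw [← Finset.prod_mul_distrib, ← Finset.prod_mul_distrib]
    exact Finset.prod_congr rfl fun k _ => by rw [pow_add]
  rw [hcomb]; ring

/-- Heine's formula: for a single measurable weight `ρ` with integrable
moments up to order `2n`, let `μ k = ∫ z^k ρ z dz` and let `p n z` be the determinant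
of the bordered `(n+1) × (n+1)` Hankel matrix (entry `μ (i+j)` for `j < n`, last
column `z^i`). Then `n! · p n z = ∫_{ℝ^n} Δₙ(u)² ∏ₖ (z − u k) ρ (u k) du`. -/
theorem heine_formula_orthogonal_polynomials
    (n : ℕ) (hn : 1 ≤ n) (ρ : ℝ → ℝ) (hmeas : Measurable ρ)
    (hint : ∀ k : ℕ, k ≤ 2 * n → Integrable (fun z : ℝ => z ^ k * ρ z))
    (z : ℝ) :
    (n.factorial : ℝ) *
        Matrix.det (Matrix.of fun i j : Fin (n + 1) =>
          if (j : ℕ) < n then ∫ u : ℝ, u ^ ((i : ℕ) + (j : ℕ)) * ρ u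
          else z ^ (i : ℕ))
      = ∫ u : Fin n → ℝ,
          (∏ j : Fin n, ∏ k ∈ Finset.Ioi j, (u k - u j)) ^ 2 *
            ∏ k : Fin n, ((z - u k) * ρ (u k)) := by
  symm
  have hInt : ∀ p : Equiv.Perm (Fin n) × Equiv.Perm (Fin (n + 1)),
      Integrable (fun u : Fin n → ℝ =>
        ((Equiv.Perm.sign p.1 : ℤ) : ℝ) * ((Equiv.Perm.sign p.2 : ℤ) : ℝ) *
          (z ^ (p.2 (Fin.last n) : ℕ) *
            ∏ k : Fin n, (u k ^ ((p.1 k : ℕ) + (p.2 k.castSucc : ℕ)) * ρ (u k)))) := by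
    intro p
    have h : Integrable (fun u : Fin n → ℝ =>
        ∏ k : Fin n, (u k ^ ((p.1 k : ℕ) + (p.2 k.castSucc : ℕ)) * ρ (u k))) := by
      refine Integrable.fintype_prod (f := fun (k : Fin n) (x : ℝ) =>
        x ^ ((p.1 k : ℕ) + (p.2 k.castSucc : ℕ)) * ρ x) fun k => ?_
      exact hint _ (by have h1 := (p.1 k).isLt; have h2 := (p.2 k.castSucc).isLt; omega)
    exact (h.const_mul _).const_mul _
  calc ∫ u : Fin n → ℝ,
          (∏ j : Fin n, ∏ k ∈ Finset.Ioi j, (u k - u j)) ^ 2 *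
            ∏ k : Fin n, ((z - u k) * ρ (u k))
      = ∫ u : Fin n → ℝ, ∑ p : Equiv.Perm (Fin n) × Equiv.Perm (Fin (n + 1)),
          ((Equiv.Perm.sign p.1 : ℤ) : ℝ) * ((Equiv.Perm.sign p.2 : ℤ) : ℝ) *
            (z ^ (p.2 (Fin.last n) : ℕ) *
              ∏ k : Fin n, (u k ^ ((p.1 k : ℕ) + (p.2 k.castSucc : ℕ)) * ρ (u k))) := by
        congr 1
        funext u
        rw [heine_pointwise]
        exact (Fintype.sum_prod_type' (f := fun (σ : Equiv.Perm (Fin n))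
          (τ : Equiv.Perm (Fin (n + 1))) =>
            ((Equiv.Perm.sign σ : ℤ) : ℝ) * ((Equiv.Perm.sign τ : ℤ) : ℝ) *
              (z ^ (τ (Fin.last n) : ℕ) *
                ∏ k : Fin n, (u k ^ ((σ k : ℕ) + (τ k.castSucc : ℕ)) * ρ (u k))))).symm
    _ = ∑ p : Equiv.Perm (Fin n) × Equiv.Perm (Fin (n + 1)),
          ∫ u : Fin n → ℝ,
            ((Equiv.Perm.sign p.1 : ℤ) : ℝ) * ((Equiv.Perm.sign p.2 : ℤ) : ℝ) *
              (z ^ (p.2 (Fin.last n) : ℕ) *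
                ∏ k : Fin n, (u k ^ ((p.1 k : ℕ) + (p.2 k.castSucc : ℕ)) * ρ (u k))) :=
        integral_finset_sum _ fun p _ => hInt p
    _ = ∑ p : Equiv.Perm (Fin n) × Equiv.Perm (Fin (n + 1)),
          ((Equiv.Perm.sign p.1 : ℤ) : ℝ) * ((Equiv.Perm.sign p.2 : ℤ) : ℝ) *
            (z ^ (p.2 (Fin.last n) : ℕ) *
              ∏ k : Fin n, ∫ x : ℝ, x ^ ((p.1 k : ℕ) + (p.2 k.castSucc : ℕ)) * ρ x) := by
        refine Finset.sum_congr rfl fun p _ => ?_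
        rw [MeasureTheory.integral_const_mul, MeasureTheory.integral_const_mul,
          MeasureTheory.integral_fintype_prod_volume_eq_prod (ι := Fin n)
            (f := fun (k : Fin n) (x : ℝ) => x ^ ((p.1 k : ℕ) + (p.2 k.castSucc : ℕ)) * ρ x)]
    _ = (n.factorial : ℝ) *
        Matrix.det (Matrix.of fun i j : Fin (n + 1) =>
          if (j : ℕ) < n then ∫ u : ℝ, u ^ ((i : ℕ) + (j : ℕ)) * ρ u
          else z ^ (i : ℕ)) := by
        rw [Fintype.sum_prod_type]
        exact heine_comb n (fun k => ∫ u : ℝ, u ^ k * ρ u) z
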